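/- Let B, C ∈ B(H). Then w([[0, B], [C, 0]])² ≥ (1/4)·max{ ‖|B|² + |C*|²‖, ‖|B*|² + |C|²‖ } + (1/8)·| ‖B + C*‖² − ‖B − C*‖² |. -/

import Mathlib

open ContinuousLinearMap

variable {H : Type*} [NormedAddCommGroup H] [InnerProductSpace ℂ H] [CompleteSpace H]

/-- The numerical radius of a bounded linear operator:
`w(T) = sup { |⟨Tx, x⟩| : ‖x‖ = 1 }`. -/
noncomputable def numRadius {E : Type*} [NormedAddCommGroup E] [InnerProductSpace ℂ E]
    (T : E →L[ℂ] E) : ℝ :=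
  sSup {r : ℝ | ∃ x : E, ‖x‖ = 1 ∧ r = ‖(inner ℂ (T x) x : ℂ)‖}

/-- The absolute value `|T| = (T*T)^(1/2)` of a bounded linear operator.
Note `opAbs (adjoint T) = (T T*)^(1/2) = |T*|`. -/
noncomputable def opAbs (T : H →L[ℂ] H) : H →L[ℂ] H := CFC.sqrt (adjoint T * T)

/-- The off-diagonal operator matrix `[[0, B], [C, 0]]` acting on `H ⊕ H`
(with the Hilbert space structure `WithLp 2 (H × H)`) by `(x₁, x₂) ↦ (B x₂, C x₁)`. -/
noncomputable def offDiag (B C : H →L[ℂ] H) :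
    WithLp 2 (H × H) →L[ℂ] WithLp 2 (H × H) :=
  ((WithLp.prodContinuousLinearEquiv 2 ℂ H H).symm : (H × H) →L[ℂ] WithLp 2 (H × H)).comp
    (((B.comp (ContinuousLinearMap.snd ℂ H H)).prod
        (C.comp (ContinuousLinearMap.fst ℂ H H))).comp
      ((WithLp.prodContinuousLinearEquiv 2 ℂ H H) : WithLp 2 (H × H) →L[ℂ] H × H))

lemma numRadius_nonneg' {E : Type*} [NormedAddCommGroup E] [InnerProductSpace ℂ E]
    (T : E →L[ℂ] E) : 0 ≤ numRadius T := by
  apply Real.sSup_nonneg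
  rintro r ⟨x, hx, rfl⟩
  exact norm_nonneg _

lemma numRadius_bddAbove {E : Type*} [NormedAddCommGroup E] [InnerProductSpace ℂ E]
    (T : E →L[ℂ] E) : BddAbove {r : ℝ | ∃ x : E, ‖x‖ = 1 ∧ r = ‖(inner ℂ (T x) x : ℂ)‖} := by
  refine ⟨‖T‖, fun r hr => ?_⟩
  obtain ⟨x, hx, rfl⟩ := hr
  calc ‖(inner ℂ (T x) x : ℂ)‖ ≤ ‖T x‖ * ‖x‖ := norm_inner_le_norm _ _
    _ ≤ ‖T‖ * ‖x‖ * ‖x‖ := by nlinarith [T.le_opNorm x, norm_nonneg x]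
    _ = ‖T‖ := by rw [hx]; ring

lemma le_numRadius {E : Type*} [NormedAddCommGroup E] [InnerProductSpace ℂ E]
    (T : E →L[ℂ] E) (x : E) (hx : ‖x‖ = 1) : ‖(inner ℂ (T x) x : ℂ)‖ ≤ numRadius T :=
  le_csSup (numRadius_bddAbove T) ⟨x, hx, rfl⟩

omit [CompleteSpace H] in
lemma inner_offDiag (B C : H →L[ℂ] H) (p q : H) :
    (inner ℂ (offDiag B C ((WithLp.equiv 2 (H × H)).symm (p, q)))
      ((WithLp.equiv 2 (H × H)).symm (p, q)) : ℂ) = inner ℂ (B q) p + inner ℂ (C p) q := by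
  simp [offDiag, WithLp.prod_inner_apply]

omit [InnerProductSpace ℂ H] [CompleteSpace H] in
lemma norm_withLp_pair (p q : H) : ‖(WithLp.equiv 2 (H × H)).symm (p, q)‖ ^ 2
    = ‖p‖ ^ 2 + ‖q‖ ^ 2 := by
  simp [WithLp.prod_norm_sq_eq_of_L2]

lemma key_bound (B C : H →L[ℂ] H) (u v : H) (hu : ‖u‖ = 1) (hv : ‖v‖ = 1)
    (l : ℂ) (hl : ‖l‖ = 1) :
    (1 / 2 : ℝ) * ‖l * inner ℂ (B v) u +
        (starRingEnd ℂ) (l * (inner ℂ ((adjoint C) v) u : ℂ))‖ ≤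
      numRadius (offDiag B C) := by
  set c : ℂ := (((Real.sqrt 2)⁻¹ : ℝ) : ℂ) with hc
  have hs2 : (0:ℝ) < Real.sqrt 2 := Real.sqrt_pos.2 (by norm_num)
  have hcn : ‖c‖ = (Real.sqrt 2)⁻¹ := by
    rw [hc]; simp [abs_of_nonneg (inv_pos.2 hs2).le]
  have hcsq : ‖c‖ ^ 2 = 1/2 := by
    rw [hcn, inv_pow, Real.sq_sqrt (by norm_num : (0:ℝ) ≤ 2)]; norm_num
  set x : WithLp 2 (H × H) := (WithLp.equiv 2 (H × H)).symm (c • l • u, c • v) with hx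
  have hxn : ‖x‖ = 1 := by
    have h1 : ‖x‖ ^ 2 = 1 := by
      rw [hx, norm_withLp_pair, norm_smul, norm_smul, norm_smul, hl, hu, hv]
      rw [mul_pow, mul_pow, mul_pow]
      rw [hcsq]; norm_num
    nlinarith [norm_nonneg x]
  have hinner : (inner ℂ (offDiag B C x) x : ℂ)
      = (1/2 : ℂ) * (l * inner ℂ (B v) u + (starRingEnd ℂ) (l * (inner ℂ ((adjoint C) v) u : ℂ))) := by
    rw [hx, inner_offDiag]
    rw [map_smul, map_smul, map_smul]
    rw [inner_smul_left, inner_smul_left, inner_smul_right, inner_smul_right,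
      inner_smul_left, inner_smul_right]
    have hCc : (inner ℂ ((C : H →L[ℂ] H) u) v : ℂ) = (starRingEnd ℂ) (inner ℂ ((adjoint C) v) u) := by
      rw [← ContinuousLinearMap.adjoint_inner_right, inner_conj_symm]
    rw [hCc]
    have hcc : (starRingEnd ℂ) c = c := by rw [hc]; exact Complex.conj_ofReal _
    have hc2 : c * c = 1/2 := by
      have h2 : (Real.sqrt 2)⁻¹ * (Real.sqrt 2)⁻¹ = (1/2:ℝ) := by
        rw [← mul_inv, Real.mul_self_sqrt (by norm_num : (0:ℝ) ≤ 2)]; norm_num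
      rw [hc, ← Complex.ofReal_mul, h2]; norm_num
    rw [hcc, map_mul]
    linear_combination (l * (inner ℂ (B v) u : ℂ) + (starRingEnd ℂ) l * (starRingEnd ℂ) (inner ℂ ((adjoint C) v) u : ℂ)) * hc2
  have := le_numRadius (offDiag B C) x hxn
  rw [hinner] at this
  calc (1/2:ℝ) * ‖l * inner ℂ (B v) u + (starRingEnd ℂ) (l * (inner ℂ ((adjoint C) v) u : ℂ))‖
      = ‖(1/2 : ℂ) * (l * inner ℂ (B v) u + (starRingEnd ℂ) (l * (inner ℂ ((adjoint C) v) u : ℂ)))‖ := by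
        rw [norm_mul]; norm_num
    _ ≤ _ := this

lemma plus_bound (B C : H →L[ℂ] H) (u v : H) (hu : ‖u‖ = 1) (hv : ‖v‖ = 1) :
    ‖(inner ℂ ((B + adjoint C) v) u : ℂ)‖ ≤ 2 * numRadius (offDiag B C) := by
  set α := (inner ℂ (B v) u : ℂ) with hα
  set β := (inner ℂ ((adjoint C) v) u : ℂ) with hβ
  have hγ : (inner ℂ ((B + adjoint C) v) u : ℂ) = α + β := by
    simp [ContinuousLinearMap.add_apply, inner_add_left, hα, hβ]
  rw [hγ]
  by_cases h0 : α + β = 0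
  · rw [h0, norm_zero]
    linarith [numRadius_nonneg' (offDiag B C)]
  · set l : ℂ := (‖α + β‖ : ℂ) / (α + β) with hld
    have hl : ‖l‖ = 1 := by
      rw [hld, norm_div, Complex.norm_real, norm_norm, div_self (norm_ne_zero_iff.2 h0)]
    have hlγ : l * (α + β) = (‖α + β‖ : ℂ) := div_mul_cancel₀ _ h0
    have hre : (l * α + (starRingEnd ℂ) (l * β)).re = ‖α + β‖ := by
      have h1 : (l * α + (starRingEnd ℂ) (l * β)).re = (l * α).re + (l * β).re := by
        simp [Complex.add_re, Complex.conj_re]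
      rw [h1, ← Complex.add_re, ← mul_add, hlγ, Complex.ofReal_re]
    have key := key_bound B C u v hu hv l hl
    have h2 : ‖α + β‖ ≤ ‖l * α + (starRingEnd ℂ) (l * β)‖ := by
      rw [← hre]
      calc (l * α + (starRingEnd ℂ) (l * β)).re
          ≤ |(l * α + (starRingEnd ℂ) (l * β)).re| := le_abs_self _
        _ ≤ ‖l * α + (starRingEnd ℂ) (l * β)‖ := by
            exact Complex.abs_re_le_norm _
    linarith

lemma minus_bound (B C : H →L[ℂ] H) (u v : H) (hu : ‖u‖ = 1) (hv : ‖v‖ = 1) :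
    ‖(inner ℂ ((B - adjoint C) v) u : ℂ)‖ ≤ 2 * numRadius (offDiag B C) := by
  set α := (inner ℂ (B v) u : ℂ) with hα
  set β := (inner ℂ ((adjoint C) v) u : ℂ) with hβ
  have hγ : (inner ℂ ((B - adjoint C) v) u : ℂ) = α - β := by
    simp [ContinuousLinearMap.sub_apply, inner_sub_left, hα, hβ]
  rw [hγ]
  by_cases h0 : α - β = 0
  · rw [h0, norm_zero]
    linarith [numRadius_nonneg' (offDiag B C)]
  · set l : ℂ := Complex.I * (‖α - β‖ : ℂ) / (α - β) with hld
    have hl : ‖l‖ = 1 := by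
      rw [hld, norm_div, norm_mul, Complex.norm_I, Complex.norm_real, norm_norm, one_mul,
        div_self (norm_ne_zero_iff.2 h0)]
    have hlγ : l * (α - β) = Complex.I * (‖α - β‖ : ℂ) := div_mul_cancel₀ _ h0
    have him : (l * α + (starRingEnd ℂ) (l * β)).im = ‖α - β‖ := by
      have h1 : (l * α + (starRingEnd ℂ) (l * β)).im = (l * α).im - (l * β).im := by
        simp [Complex.add_im, Complex.conj_im]; ring
      rw [h1, ← Complex.sub_im, ← mul_sub, hlγ]
      simp
    have key := key_bound B C u v hu hv l hl
    have h2 : ‖α - β‖ ≤ ‖l * α + (starRingEnd ℂ) (l * β)‖ := by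
      rw [← him]
      calc (l * α + (starRingEnd ℂ) (l * β)).im
          ≤ |(l * α + (starRingEnd ℂ) (l * β)).im| := le_abs_self _
        _ ≤ ‖l * α + (starRingEnd ℂ) (l * β)‖ := by
            exact Complex.abs_im_le_norm _
    linarith

lemma opNorm_le_of_inner (D : H →L[ℂ] H) (w : ℝ) (hw : 0 ≤ w)
    (h : ∀ u v : H, ‖u‖ = 1 → ‖v‖ = 1 → ‖(inner ℂ (D v) u : ℂ)‖ ≤ w) : ‖D‖ ≤ w := by
  refine D.opNorm_le_bound hw fun v => ?_
  by_cases hv : v = 0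
  · simp [hv]
  · have hvn : ‖v‖ ≠ 0 := norm_ne_zero_iff.2 hv
    set v' : H := ((‖v‖⁻¹ : ℝ) : ℂ) • v with hv'
    have hv1 : ‖v'‖ = 1 := by
      rw [hv', norm_smul, Complex.norm_real, norm_inv, norm_norm, inv_mul_cancel₀ hvn]
    have hDv : D v = (‖v‖ : ℂ) • D v' := by
      rw [hv', map_smul, smul_smul, ← Complex.ofReal_mul, mul_inv_cancel₀ hvn]
      simp
    suffices hs : ‖D v'‖ ≤ w by
      rw [hDv, norm_smul, Complex.norm_real, norm_norm, mul_comm]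
      exact mul_le_mul_of_nonneg_right hs (norm_nonneg v)
    by_cases hz : D v' = 0
    · rw [hz, norm_zero]; exact hw
    · have hzn : ‖D v'‖ ≠ 0 := norm_ne_zero_iff.2 hz
      set u : H := ((‖D v'‖⁻¹ : ℝ) : ℂ) • D v' with hud
      have hu1 : ‖u‖ = 1 := by
        rw [hud, norm_smul, Complex.norm_real, norm_inv, norm_norm, inv_mul_cancel₀ hzn]
      have := h u v' hu1 hv1
      have hval : ‖(inner ℂ (D v') u : ℂ)‖ = ‖D v'‖ := by
        rw [hud, inner_smul_right, norm_mul, Complex.norm_real, norm_inv, norm_norm,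
          inner_self_eq_norm_sq_to_K, norm_pow, RCLike.norm_ofReal, abs_norm, pow_two,
          ← mul_assoc, inv_mul_cancel₀ hzn, one_mul]
      rw [hval] at this
      exact this

set_option maxHeartbeats 1000000 in
theorem stmt_5 (B C : H →L[ℂ] H) :
    (1 / 4) * max ‖opAbs B ^ 2 + opAbs (adjoint C) ^ 2‖ ‖opAbs (adjoint B) ^ 2 + opAbs C ^ 2‖ +
        (1 / 8) * |‖B + adjoint C‖ ^ 2 - ‖B - adjoint C‖ ^ 2| ≤
      numRadius (offDiag B C) ^ 2 := by
  set w := numRadius (offDiag B C) with hwd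
  have hw : 0 ≤ w := numRadius_nonneg' _
  have hD1 : ‖B + adjoint C‖ ≤ 2 * w :=
    opNorm_le_of_inner _ _ (by linarith) (fun u v hu hv => plus_bound B C u v hu hv)
  have hD2 : ‖B - adjoint C‖ ≤ 2 * w :=
    opNorm_le_of_inner _ _ (by linarith) (fun u v hu hv => minus_bound B C u v hu hv)
  -- C*-identities
  have habs : ∀ T : H →L[ℂ] H, opAbs T ^ 2 = adjoint T * T := by
    intro T
    exact CFC.sq_sqrt _ (by rw [← ContinuousLinearMap.star_eq_adjoint]; exact star_mul_self_nonneg T)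
  have hM1 : opAbs B ^ 2 + opAbs (adjoint C) ^ 2 = adjoint B * B + C * adjoint C := by
    rw [habs, habs, adjoint_adjoint]
  have hM2 : opAbs (adjoint B) ^ 2 + opAbs C ^ 2 = B * adjoint B + adjoint C * C := by
    rw [habs, habs, adjoint_adjoint]
  set M1 : H →L[ℂ] H := adjoint B * B + C * adjoint C with hM1d
  set M2 : H →L[ℂ] H := B * adjoint B + adjoint C * C with hM2d
  set D1 : H →L[ℂ] H := B + adjoint C with hD1d
  set D2 : H →L[ℂ] H := B - adjoint C with hD2d
  have hexp1 : star D1 * D1 + star D2 * D2 = M1 + M1 := by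
    rw [hD1d, hD2d, hM1d, ContinuousLinearMap.star_eq_adjoint, ContinuousLinearMap.star_eq_adjoint]
    rw [show adjoint (B + adjoint C) = adjoint B + C by
        rw [← ContinuousLinearMap.star_eq_adjoint, star_add, ContinuousLinearMap.star_eq_adjoint,
          ContinuousLinearMap.star_eq_adjoint, adjoint_adjoint]]
    rw [show adjoint (B - adjoint C) = adjoint B - C by
        rw [← ContinuousLinearMap.star_eq_adjoint, star_sub, ContinuousLinearMap.star_eq_adjoint,
          ContinuousLinearMap.star_eq_adjoint, adjoint_adjoint]]
    noncomm_ring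
  have hexp2 : D1 * star D1 + D2 * star D2 = M2 + M2 := by
    rw [hD1d, hD2d, hM2d, ContinuousLinearMap.star_eq_adjoint, ContinuousLinearMap.star_eq_adjoint]
    rw [show adjoint (B + adjoint C) = adjoint B + C by
        rw [← ContinuousLinearMap.star_eq_adjoint, star_add, ContinuousLinearMap.star_eq_adjoint,
          ContinuousLinearMap.star_eq_adjoint, adjoint_adjoint]]
    rw [show adjoint (B - adjoint C) = adjoint B - C by
        rw [← ContinuousLinearMap.star_eq_adjoint, star_sub, ContinuousLinearMap.star_eq_adjoint,
          ContinuousLinearMap.star_eq_adjoint, adjoint_adjoint]]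
    noncomm_ring
  have hn1 : 2 * ‖M1‖ ≤ ‖D1‖ ^ 2 + ‖D2‖ ^ 2 := by
    have : ‖M1 + M1‖ ≤ ‖star D1 * D1‖ + ‖star D2 * D2‖ := by
      rw [← hexp1]; exact norm_add_le _ _
    rw [CStarRing.norm_star_mul_self, CStarRing.norm_star_mul_self] at this
    have h2 : ‖M1 + M1‖ = 2 * ‖M1‖ := by
      rw [show M1 + M1 = (2 : ℝ) • M1 by rw [two_smul], norm_smul]
      simp
    rw [pow_two, pow_two]
    linarith
  have hn2 : 2 * ‖M2‖ ≤ ‖D1‖ ^ 2 + ‖D2‖ ^ 2 := by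
    have : ‖M2 + M2‖ ≤ ‖D1 * star D1‖ + ‖D2 * star D2‖ := by
      rw [← hexp2]; exact norm_add_le _ _
    rw [CStarRing.norm_self_mul_star, CStarRing.norm_self_mul_star] at this
    have h2 : ‖M2 + M2‖ = 2 * ‖M2‖ := by
      rw [show M2 + M2 = (2 : ℝ) • M2 by rw [two_smul], norm_smul]
      simp
    rw [pow_two, pow_two]
    linarith
  rw [hM1, hM2]
  have ha : ‖D1‖ ^ 2 ≤ 4 * w ^ 2 := by nlinarith [norm_nonneg D1]
  have hb : ‖D2‖ ^ 2 ≤ 4 * w ^ 2 := by nlinarith [norm_nonneg D2]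
  have hmax : max ‖M1‖ ‖M2‖ ≤ (‖D1‖ ^ 2 + ‖D2‖ ^ 2) / 2 := max_le (by linarith) (by linarith)
  rcases le_total (‖D1‖ ^ 2) (‖D2‖ ^ 2) with h | h
  · rw [abs_of_nonpos (by linarith)]
    linarith
  · rw [abs_of_nonneg (by linarith)]
    linarith
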